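/- Let X be the even shift. Then the singleton {ξ_{1^∞}} (where 1^∞ = 1111… is the constant word) is an open subset of Ω_X, and ξ_{1^∞} is a fixed point of the spectral partial action: for g the generator of 𝔽 corresponding to the letter 1, g⁻¹ ∈ ξ_{1^∞} and g·ξ_{1^∞} = ξ_{1^∞}. Consequently, the spectral partial action associated to the even shift is not topologically free. -/

import Mathlib

open scoped Classical

namespace SubshiftPaper

variable {Λ : Type}

/-- The left shift on infinite words. -/
def shiftMap (x : ℕ → Λ) : ℕ → Λ := fun n => x (n + 1)

/-- Concatenation of a finite word with an infinite word. -/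
def cat (α : List Λ) (y : ℕ → Λ) : ℕ → Λ := fun n => α.getD n (y (n - α.length))

/-- `α` is a prefix of the infinite word `x`. -/
def Pref (α : List Λ) (x : ℕ → Λ) : Prop := ∀ (i : ℕ) (h : i < α.length), x i = α[i]

/-- The tail of `x` after `n` letters. -/
def tail (x : ℕ → Λ) (n : ℕ) : ℕ → Λ := fun i => x (n + i)

/-- `α` occurs in `x` at position `n`. -/
def OccursAt (α : List Λ) (x : ℕ → Λ) (n : ℕ) : Prop :=
  ∀ (i : ℕ) (h : i < α.length), x (n + i) = α[i]

/-- `α` occurs in `x` (as a contiguous block of letters). -/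
def Occurs (α : List Λ) (x : ℕ → Λ) : Prop := ∃ n, OccursAt α x n

/-- `X` is a subshift: a nonempty closed shift-invariant subset. -/
def IsSubshift [TopologicalSpace Λ] (X : Set (ℕ → Λ)) : Prop :=
  X.Nonempty ∧ IsClosed X ∧ ∀ x ∈ X, shiftMap x ∈ X

/-- The set of infinite words avoiding all words in `F`. -/
def ForbidSpace (F : Set (List Λ)) : Set (ℕ → Λ) := {x | ∀ α ∈ F, ¬ Occurs α x}

/-- `X` is a subshift of finite type. -/
def IsSFT (X : Set (ℕ → Λ)) : Prop := ∃ F : Set (List Λ), F.Finite ∧ X = ForbidSpace F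

/-- The follower set of a finite word. -/
def follower (X : Set (ℕ → Λ)) (α : List Λ) : Set (ℕ → Λ) := {y | y ∈ X ∧ cat α y ∈ X}

/-- The cylinder of a finite word. -/
def cylinder (X : Set (ℕ → Λ)) (α : List Λ) : Set (ℕ → Λ) := {x | x ∈ X ∧ Pref α x}

/-- The language of `X`. -/
def Language (X : Set (ℕ → Λ)) : Set (List Λ) := {α | ∃ x ∈ X, Occurs α x}

/-- The embedding of finite words into the free group. -/
def wd (α : List Λ) : FreeGroup Λ := (α.map FreeGroup.of).prod

/-- Indicator function of a set of group elements. -/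
noncomputable def chi (s : Set (FreeGroup Λ)) : FreeGroup Λ → Bool :=
  fun g => if g ∈ s then true else false

/-- The set `ξ_x ⊆ 𝔽`. -/
def xiSet [DecidableEq Λ] (X : Set (ℕ → Λ)) (x : ℕ → Λ) : Set (FreeGroup Λ) :=
  {g | ∃ α β : List Λ, g = wd α * (wd β)⁻¹ ∧
        FreeGroup.norm g = α.length + β.length ∧
        Pref α x ∧ tail x α.length ∈ follower X α ∩ follower X β}

/-- `ξ_x` as an element of `2^𝔽`. -/
noncomputable def xiB [DecidableEq Λ] (X : Set (ℕ → Λ)) (x : ℕ → Λ) : FreeGroup Λ → Bool :=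
  chi (xiSet X x)

/-- The spectrum `Ω_X`: the closure of `{ξ_x : x ∈ X}` in `2^𝔽`. -/
noncomputable def Omega [DecidableEq Λ] (X : Set (ℕ → Λ)) : Set (FreeGroup Λ → Bool) :=
  closure ((fun x => xiB X x) '' X)

/-- Left translation of an element of `2^𝔽`. -/
def translate (g : FreeGroup Λ) (ξ : FreeGroup Λ → Bool) : FreeGroup Λ → Bool :=
  fun h => ξ (g⁻¹ * h)

/-- `x` is the stem of `ξ`: `ξ ∩ 𝔽₊` is exactly the set of prefixes of `x`. -/
def IsStem (ξ : FreeGroup Λ → Bool) (x : ℕ → Λ) : Prop :=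
  {g | ξ g = true} ∩ {g | ∃ α : List Λ, g = wd α} =
    {g | ∃ α : List Λ, g = wd α ∧ Pref α x}

/-- `x` is the stem of `ξ` at `g`: `ξ ∩ g𝔽₊ = {gα : α is a prefix of x}`. -/
def IsStemAt (ξ : FreeGroup Λ → Bool) (g : FreeGroup Λ) (x : ℕ → Λ) : Prop :=
  {h | ξ h = true} ∩ {h | ∃ α : List Λ, h = g * wd α} =
    {h | ∃ α : List Λ, h = g * wd α ∧ Pref α x}

/-- The orbit of `ξ` under the spectral partial action. -/
def Orbit (ξ : FreeGroup Λ → Bool) : Set (FreeGroup Λ → Bool) :=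
  {η | ∃ g : FreeGroup Λ, ξ g⁻¹ = true ∧ η = translate g ξ}

/-- Topological freeness of the spectral partial action. -/
noncomputable def TopFree [DecidableEq Λ] (X : Set (ℕ → Λ)) : Prop :=
  ∀ g : FreeGroup Λ, g ≠ 1 →
    ∀ U : Set (FreeGroup Λ → Bool), IsOpen U →
      (U ∩ Omega X ⊆ {ξ | ξ g⁻¹ = true ∧ translate g ξ = ξ}) → U ∩ Omega X = ∅

/-- The periodic infinite word `γ^∞`. -/
noncomputable def perInf [Nonempty Λ] (γ : List Λ) : ℕ → Λ :=
  fun n => γ.getD (n % γ.length) (Classical.arbitrary Λ)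

/-- `n`-fold concatenation of a finite word with itself. -/
def rep : ℕ → List Λ → List Λ
  | 0, _ => []
  | n + 1, γ => γ ++ rep n γ

/-- `γ` is a circuit relative to `X`. -/
noncomputable def IsCircuit [Nonempty Λ] (X : Set (ℕ → Λ)) (γ : List Λ) : Prop :=
  γ ≠ [] ∧ perInf γ ∈ X

/-- `y` is an exit for the circuit `γ`. -/
noncomputable def IsExit [Nonempty Λ] (X : Set (ℕ → Λ)) (γ : List Λ) (y : ℕ → Λ) : Prop :=
  y ≠ perInf γ ∧ cat γ y ∈ X

/-- `z` is a strong exit for the circuit `γ`. -/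
noncomputable def IsStrongExit [Nonempty Λ] (X : Set (ℕ → Λ)) (γ : List Λ) (z : ℕ → Λ) : Prop :=
  z ≠ perInf γ ∧ ∀ n : ℕ, cat (rep n γ) z ∈ X

/-- The sets `X_g` of the standard partial action. -/
def Xg [DecidableEq Λ] (X : Set (ℕ → Λ)) (g : FreeGroup Λ) : Set (ℕ → Λ) :=
  {x | ∃ α β : List Λ, g = wd α * (wd β)⁻¹ ∧
        FreeGroup.norm g = α.length + β.length ∧
        ∃ y ∈ follower X α ∩ follower X β, x = cat α y}

/-- `x` is a fixed point for `θ_g`. -/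
def IsThetaFixed [DecidableEq Λ] (X : Set (ℕ → Λ)) (g : FreeGroup Λ) (x : ℕ → Λ) : Prop :=
  ∃ α β : List Λ, g = wd α * (wd β)⁻¹ ∧
    FreeGroup.norm g = α.length + β.length ∧
    ∃ y ∈ follower X α ∩ follower X β, x = cat β y ∧ cat α y = x

/-- `x` may be collectively reached from the finite set `B`. -/
def CollReached (X : Set (ℕ → Λ)) (B : Finset (List Λ)) (x : ℕ → Λ) : Prop :=
  ∃ α γ : List Λ, Pref α x ∧ ∀ β ∈ B, cat (β ++ γ) (tail x α.length) ∈ X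

/-- `X` is collectively cofinal. -/
def CollCofinal (X : Set (ℕ → Λ)) : Prop :=
  ∀ B : Finset (List Λ), ↑B ⊆ Language X → (⋂ β ∈ B, follower X β).Nonempty →
    ∀ x ∈ X, CollReached X B x

/-- `X` is strongly cofinal. -/
def StrongCofinal (X : Set (ℕ → Λ)) : Prop :=
  ∀ β ∈ Language X, ∃ M : ℕ, ∀ x ∈ X, ∃ α γ : List Λ, Pref α x ∧
    cat (β ++ γ) (tail x α.length) ∈ X ∧ α.length + γ.length ≤ M

/-- The even shift. -/
def evenShift : Set (ℕ → Fin 2) :=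
  ForbidSpace {w | ∃ n : ℕ, w = 0 :: (List.replicate (2 * n + 1) 1 ++ [0])}


/-! ### Auxiliary lemmas for the proof -/

section Aux

set_option linter.unusedSectionVars false

lemma chain'_all {A : Type*} {R : A → A → Prop} (h : ∀ a b, R a b) : ∀ l : List A, l.Chain' R
  | [] => List.isChain_nil
  | [a] => List.isChain_singleton a
  | a :: b :: l => List.isChain_cons_cons.mpr ⟨h a b, chain'_all h (b :: l)⟩

variable [DecidableEq Λ]

lemma reduce_eq_self : ∀ {L : List (Λ × Bool)},
    L.Chain' (fun a b => ¬(a.1 = b.1 ∧ a.2 = !b.2)) → FreeGroup.reduce L = L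
  | [], _ => rfl
  | [x], _ => rfl
  | x :: y :: L, h => by
    obtain ⟨h1, h2⟩ := List.isChain_cons_cons.mp h
    have ih := reduce_eq_self h2
    rw [FreeGroup.reduce.cons, ih]
    simp only [if_neg h1]

lemma reduce_length_le (L : List (Λ × Bool)) :
    (FreeGroup.reduce L).length ≤ L.length :=
  FreeGroup.Red.length_le FreeGroup.reduce.red

lemma reduce_eq_of_length : ∀ {L : List (Λ × Bool)},
    (FreeGroup.reduce L).length = L.length → FreeGroup.reduce L = L
  | [], _ => rfl
  | x :: xs, h => by
    rw [FreeGroup.reduce.cons] at h ⊢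
    rcases hr : FreeGroup.reduce xs with _ | ⟨y, ys⟩
    · rw [hr] at h
      replace h : [x].length = (x :: xs).length := h
      show [x] = x :: xs
      have hz : xs.length = 0 := by simp only [List.length_cons, List.length_nil] at h; omega
      rw [List.length_eq_zero_iff.mp hz]
    · rw [hr] at h
      have hle := reduce_length_le xs
      rw [hr] at hle
      replace h : (if x.1 = y.1 ∧ x.2 = !y.2 then ys else x :: y :: ys).length
          = (x :: xs).length := h
      show (if x.1 = y.1 ∧ x.2 = !y.2 then ys else x :: y :: ys) = x :: xs
      by_cases hc : x.1 = y.1 ∧ x.2 = !y.2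
      · rw [if_pos hc] at h
        simp at h hle; omega
      · rw [if_neg hc] at h ⊢
        have hlen : xs.length = (FreeGroup.reduce xs).length := by
          rw [hr]; simp at h ⊢; omega
        have h2 := reduce_eq_of_length hlen.symm
        rw [hr] at h2
        rw [h2]

lemma wd_mk (α : List Λ) : wd α = FreeGroup.mk (α.map fun a => (a, true)) := by
  induction α with
  | nil => rfl
  | cons a l ih =>
    simp only [wd, List.map_cons, List.prod_cons] at ih ⊢
    rw [ih]
    rfl

lemma wd_nil : wd ([] : List Λ) = 1 := rfl

lemma wd_append (α β : List Λ) : wd (α ++ β) = wd α * wd β := by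
  simp [wd]

lemma wd_singleton (a : Λ) : wd [a] = FreeGroup.of a := by simp [wd]

lemma wd_cons (a : Λ) (l : List Λ) : wd (a :: l) = FreeGroup.of a * wd l := by
  simp [wd]

lemma wd_mul_inv_eq_mk (α β : List Λ) :
    wd α * (wd β)⁻¹ =
      FreeGroup.mk ((α.map fun a => (a, true)) ++ (β.map fun b => (b, false)).reverse) := by
  rw [wd_mk, wd_mk, FreeGroup.inv_mk, FreeGroup.mul_mk]
  congr 1
  simp [FreeGroup.invRev, List.map_map, Function.comp]

lemma toWord_wd_mul_inv (α β : List Λ)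
    (h : ∀ a b, α.getLast? = some a → β.getLast? = some b → a ≠ b) :
    (wd α * (wd β)⁻¹).toWord =
      (α.map fun a => (a, true)) ++ (β.map fun b => (b, false)).reverse := by
  rw [wd_mul_inv_eq_mk, FreeGroup.toWord_mk]
  apply reduce_eq_self
  show List.IsChain _ _
  rw [List.isChain_append]
  refine ⟨?_, ?_, ?_⟩
  · rw [List.isChain_map]; exact chain'_all (by simp) _
  · rw [List.isChain_reverse, List.isChain_map]; exact chain'_all (by simp [flip]) _
  · intro p hp q hq
    simp only [List.getLast?_map, Option.mem_def, Option.map_eq_some_iff] at hp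
    rw [List.head?_reverse, List.getLast?_map] at hq
    simp only [Option.mem_def, Option.map_eq_some_iff] at hq
    obtain ⟨a, ha, rfl⟩ := hp
    obtain ⟨b, hb, rfl⟩ := hq
    simp only [not_and]
    intro hab
    exact absurd hab (h a b ha hb)

lemma norm_wd_mul_inv (α β : List Λ)
    (h : ∀ a b, α.getLast? = some a → β.getLast? = some b → a ≠ b) :
    FreeGroup.norm (wd α * (wd β)⁻¹) = α.length + β.length := by
  rw [FreeGroup.norm, toWord_wd_mul_inv α β h]
  simp

lemma norm_wd_inv (β : List Λ) : FreeGroup.norm (wd β)⁻¹ = β.length := by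
  have := norm_wd_mul_inv ([] : List Λ) β (by simp)
  simpa [wd_nil] using this

lemma norm_wd_mul_inv_le (α β : List Λ) :
    FreeGroup.norm (wd α * (wd β)⁻¹) ≤ α.length + β.length := by
  rw [wd_mul_inv_eq_mk]
  calc FreeGroup.norm _ ≤ _ := FreeGroup.norm_mk_le
    _ = α.length + β.length := by simp

lemma wd_mul_inv_cancel (α β : List Λ) (a : Λ) :
    wd (α ++ [a]) * (wd (β ++ [a]))⁻¹ = wd α * (wd β)⁻¹ := by
  rw [wd_append, wd_append]
  group

/-- Parsing a reduced form: the two halves are uniquely determined. -/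
lemma parse_words : ∀ (α γ : List Λ) {β δ : List Λ},
    (α.map fun a => (a, true)) ++ (β.map fun b => (b, false)).reverse
      = (γ.map fun a => (a, true)) ++ (δ.map fun b => (b, false)).reverse →
    α = γ ∧ β = δ
  | [], [], β, δ, h => by
    simp only [List.map_nil, List.nil_append] at h
    have h2 : β.map (fun b => (b, false)) = δ.map (fun b => (b, false)) :=
      List.reverse_injective h
    refine ⟨rfl, ?_⟩
    have hinj : Function.Injective (fun b : Λ => (b, false)) := by
      intro a b hab; injection hab
    exact List.map_injective_iff.mpr hinj h2
  | [], c :: γ, β, δ, h => by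
    exfalso
    simp only [List.map_nil, List.nil_append] at h
    have hm : (c, true) ∈ (β.map fun b => (b, false)).reverse := by
      rw [h]; simp
    simp at hm
  | a :: α, [], β, δ, h => by
    exfalso
    simp only [List.map_nil, List.nil_append] at h
    have hm : (a, true) ∈ (δ.map fun b => (b, false)).reverse := by
      rw [← h]; simp
    simp at hm
  | a :: α, c :: γ, β, δ, h => by
    simp only [List.map_cons, List.cons_append] at h
    injection h with h1 h2
    obtain ⟨hα, hβ⟩ := parse_words α γ h2
    have hac : a = c := by injection h1
    exact ⟨by rw [hac, hα], hβ⟩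

/-- Unique witnesses for a reduced-form element. -/
lemma witness_unique {α β γ δ : List Λ}
    (hne : ∀ a b, γ.getLast? = some a → δ.getLast? = some b → a ≠ b)
    (heq : wd α * (wd β)⁻¹ = wd γ * (wd δ)⁻¹)
    (hnorm : FreeGroup.norm (wd α * (wd β)⁻¹) = α.length + β.length) :
    α = γ ∧ β = δ := by
  have hL : FreeGroup.reduce ((α.map fun a => (a, true)) ++ (β.map fun b => (b, false)).reverse)
      = (wd α * (wd β)⁻¹).toWord := by
    rw [wd_mul_inv_eq_mk, FreeGroup.toWord_mk]
  have hlen : (FreeGroup.reduce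
      ((α.map fun a => (a, true)) ++ (β.map fun b => (b, false)).reverse)).length
      = ((α.map fun a => (a, true)) ++ (β.map fun b => (b, false)).reverse).length := by
    rw [hL]
    show FreeGroup.norm _ = _
    rw [hnorm]; simp
  have hred := reduce_eq_of_length hlen
  rw [hL] at hred
  rw [heq, toWord_wd_mul_inv γ δ hne] at hred
  exact parse_words α γ hred.symm

end Aux

section EvenShiftAux

/-- The all-ones word. -/
local notation "x1" => (fun _ => (1 : Fin 2) : ℕ → Fin 2)

lemma fin2_cases (a : Fin 2) : a = 0 ∨ a = 1 := by fin_cases a <;> simp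

lemma cat_lt {y : ℕ → Λ} (α : List Λ) {n : ℕ} (h : n < α.length) :
    cat α y n = α[n] :=
  List.getD_eq_getElem _ _ h

lemma cat_ge {y : ℕ → Λ} (α : List Λ) {n : ℕ} (h : α.length ≤ n) :
    cat α y n = y (n - α.length) :=
  List.getD_eq_default _ _ h

lemma cat_nil (y : ℕ → Λ) : cat [] y = y := by
  funext n
  have := cat_ge (y := y) ([] : List Λ) (n := n) (by simp)
  simpa using this

lemma cat_ones (k : ℕ) : cat (List.replicate k (1 : Fin 2)) x1 = x1 := by
  funext n
  by_cases h : n < k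
  · rw [cat_lt _ (by simpa using h)]
    simp
  · rw [cat_ge _ (by simpa using not_lt.mp h)]

lemma tail_ones (n : ℕ) : tail x1 n = x1 := rfl

lemma pref_ones {α : List (Fin 2)} (h : Pref α x1) : α = List.replicate α.length 1 := by
  apply List.eq_replicate_of_mem
  intro b hb
  obtain ⟨i, hi, rfl⟩ := List.mem_iff_getElem.mp hb
  exact (h i hi).symm

lemma pref_replicate_ones (k : ℕ) : Pref (List.replicate k (1 : Fin 2)) x1 := by
  intro i h
  simp

lemma cat_snoc_one (β : List (Fin 2)) : cat (β ++ [1]) x1 = cat β x1 := by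
  funext n
  rcases lt_trichotomy n β.length with h | h | h
  · rw [cat_lt _ (by simp; omega), cat_lt _ h]
    exact List.getElem_append_left _
  · subst h
    rw [cat_lt _ (by simp), cat_ge _ le_rfl]
    rw [List.getElem_append_right (le_refl β.length)]
    simp
  · rw [cat_ge _ (by simp; omega), cat_ge _ (by omega)]

/-- getElem of a forbidden word. -/
lemma forbWord_getElem (m i : ℕ) (hi : i < m + 2) :
    (0 :: (List.replicate m (1 : Fin 2) ++ [0]))[i]'(by simp; omega) =
      if i = 0 ∨ i = m + 1 then 0 else 1 := by
  rcases i with _ | j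
  · simp
  · rw [List.getElem_cons_succ]
    by_cases hj : j < m
    · rw [List.getElem_append_left (by simpa using hj)]
      rw [if_neg (by omega)]
      simp
    · have hj' : j = m := by omega
      subst hj'
      rw [List.getElem_append_right (by simp)]
      rw [if_pos (by omega)]
      simp

lemma ones_mem : x1 ∈ evenShift := by
  rintro w ⟨n, rfl⟩ ⟨p, hp⟩
  have h := hp 0 (by simp)
  simp only [List.getElem_cons_zero] at h
  exact absurd (h : (1 : Fin 2) = 0) (by decide)

lemma cat_zero_ones_mem : cat [0] x1 ∈ evenShift := by
  rintro w ⟨n, rfl⟩ ⟨p, hp⟩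
  have h0 := hp 0 (by simp)
  rw [forbWord_getElem (2 * n + 1) 0 (by omega)] at h0
  simp only [eq_self_iff_true, true_or, if_true] at h0
  have hL := hp (2 * n + 2) (by simp)
  rw [forbWord_getElem (2 * n + 1) (2 * n + 2) (by omega)] at hL
  rw [if_pos (Or.inr (by omega : 2 * n + 2 = 2 * n + 1 + 1))] at hL
  rcases Nat.eq_zero_or_pos p with hp0 | hp1
  · subst hp0
    rw [cat_ge _ (by simp)] at hL
    exact absurd hL (by decide)
  · rw [cat_ge _ (by simp; omega)] at h0
    exact absurd h0 (by decide)

lemma cat_single_zero (y : ℕ → Fin 2) : cat [0] y 0 = 0 := by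
  rw [cat_lt _ (by simp)]
  rfl

lemma cat_single_succ (a : Fin 2) (y : ℕ → Fin 2) (m : ℕ) : cat [a] y (m + 1) = y m := by
  rw [cat_ge _ (by simp)]
  simp

/-- An odd block of ones delimited by zeros is forbidden. -/
lemma forbid_block {z : ℕ → Fin 2} (hz : z ∈ evenShift) {k : ℕ} (hodd : k % 2 = 1)
    (h0 : z 0 = 0) (hmid : ∀ i, 1 ≤ i → i ≤ k → z i = 1) (hend : z (k + 1) = 0) : False := by
  apply hz (0 :: (List.replicate k (1 : Fin 2) ++ [0]))
  · exact ⟨(k - 1) / 2, by rw [show 2 * ((k - 1) / 2) + 1 = k from by omega]⟩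
  · refine ⟨0, fun i hi => ?_⟩
    simp only [List.length_cons, List.length_append, List.length_replicate,
      List.length_nil] at hi
    rw [Nat.zero_add]
    rw [forbWord_getElem k i (by omega)]
    by_cases hc : i = 0 ∨ i = k + 1
    · rw [if_pos hc]
      rcases hc with rfl | rfl
      · exact h0
      · exact hend
    · rw [if_neg hc]
      push_neg at hc
      exact hmid i (by omega) (by omega)

/-- Main combinatorial step: the two membership conditions force `x = 1^∞`. -/
lemma all_ones_of {x : ℕ → Fin 2}
    (h1 : cat [0] (tail x 1) ∈ evenShift) (h2 : cat [0] (tail x 2) ∈ evenShift)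
    (hx0 : x 0 = 1) (hx1 : x 1 = 1) : ∀ n, x n = 1 := by
  by_contra hc
  push_neg at hc
  obtain ⟨n, hn⟩ := hc
  have hex : ∃ n, x n = 0 := ⟨n, by rcases fin2_cases (x n) with h | h; exacts [h, absurd h hn]⟩
  set k := Nat.find hex with hkdef
  have hk : x k = 0 := Nat.find_spec hex
  have hmin : ∀ j, j < k → x j = 1 := by
    intro j hj
    have := Nat.find_min hex hj
    rcases fin2_cases (x j) with h | h
    · exact absurd h this
    · exact h
  have hk2 : 2 ≤ k := by
    by_contra hlt
    push_neg at hlt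
    interval_cases k
    · rw [hx0] at hk; exact absurd hk (by decide)
    · rw [hx1] at hk; exact absurd hk (by decide)
  rcases Nat.even_or_odd k with he | ho
  · -- k even: block of length k-1 in cat [0] (tail x 1)
    refine forbid_block h1 (k := k - 1) ?_ (cat_single_zero _) ?_ ?_
    · have := Nat.even_iff.mp he; omega
    · intro i h1i hik
      obtain ⟨j, rfl⟩ : ∃ j, i = j + 1 := ⟨i - 1, by omega⟩
      rw [cat_single_succ]
      show x (1 + j) = 1
      exact hmin _ (by omega)
    · obtain ⟨j, hj⟩ : ∃ j, (k - 1) + 1 = j + 1 := ⟨k - 1, rfl⟩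
      rw [hj, cat_single_succ]
      show x (1 + j) = 0
      have : 1 + j = k := by omega
      rw [this]; exact hk
  · -- k odd: block of length k-2 in cat [0] (tail x 2)
    refine forbid_block h2 (k := k - 2) ?_ (cat_single_zero _) ?_ ?_
    · have := Nat.odd_iff.mp ho; omega
    · intro i h1i hik
      obtain ⟨j, rfl⟩ : ∃ j, i = j + 1 := ⟨i - 1, by omega⟩
      rw [cat_single_succ]
      show x (2 + j) = 1
      exact hmin _ (by omega)
    · obtain ⟨j, hj⟩ : ∃ j, (k - 2) + 1 = j + 1 := ⟨k - 2, rfl⟩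
      rw [hj, cat_single_succ]
      show x (2 + j) = 0
      have : 2 + j = k := by omega
      rw [this]; exact hk

end EvenShiftAux
section XiAux

local notation "x1" => (fun _ => (1 : Fin 2) : ℕ → Fin 2)

lemma cat_one_ones : cat [(1 : Fin 2)] x1 = x1 := by
  have := cat_ones 1
  simpa using this

lemma cat_two_ones : cat [(1 : Fin 2), 1] x1 = x1 := by
  have := cat_ones 2
  simpa using this

lemma repl_last {j : ℕ} (a : Fin 2)
    (ha : (List.replicate j (1 : Fin 2)).getLast? = some a) : a = 1 := by
  have hne : (List.replicate j (1 : Fin 2)) ≠ [] := by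
    rintro h; rw [h] at ha; simp at ha
  rw [List.getLast?_eq_getLast hne] at ha
  have hm := List.getLast_mem hne
  injection ha with h
  have hm' : a ∈ List.replicate j (1 : Fin 2) := h ▸ hm
  exact List.eq_of_mem_replicate hm'

lemma beta_ne_one {j : ℕ} {β : List (Fin 2)}
    (hn : FreeGroup.norm (wd (List.replicate (j + 1) (1 : Fin 2)) * (wd β)⁻¹)
      = (j + 1) + β.length) :
    ∀ b, β.getLast? = some b → b ≠ 1 := by
  intro b hb hb1
  have hβne : β ≠ [] := by rintro rfl; simp at hb
  have hbl : β.getLast hβne = 1 := by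
    rw [List.getLast?_eq_getLast hβne] at hb
    injection hb with h
    rw [h, hb1]
  have hsplit : β.dropLast ++ [1] = β := by
    rw [← hbl]; exact List.dropLast_append_getLast hβne
  rw [List.replicate_succ' (n := j) (a := 1), ← hsplit, wd_mul_inv_cancel] at hn
  have hle := norm_wd_mul_inv_le (List.replicate j (1 : Fin 2)) β.dropLast
  rw [hn] at hle
  have hβpos : 0 < β.length := List.length_pos_iff.mpr hβne
  simp only [List.length_replicate, List.length_dropLast, List.length_append,
    List.length_cons, List.length_nil] at hle
  omega

lemma xiB_eq_true_iff {X : Set (ℕ → Fin 2)} {x : ℕ → Fin 2} {g : FreeGroup (Fin 2)} :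
    xiB X x g = true ↔ g ∈ xiSet X x := by
  by_cases h : g ∈ xiSet X x <;> simp [xiB, chi, h]

/-- Invariance of `ξ_{1^∞}` under left translation by `(of 1)⁻¹`. -/
lemma mem_shift_inv {g : FreeGroup (Fin 2)} (hg : g ∈ xiSet evenShift x1) :
    (FreeGroup.of 1)⁻¹ * g ∈ xiSet evenShift x1 := by
  obtain ⟨α, β, heq, hn, hp, ht⟩ := hg
  have hα := pref_ones hp
  have hβX : cat β x1 ∈ evenShift := ht.2.2
  rcases hm : α.length with _ | j
  · have hαnil : α = [] := List.length_eq_zero_iff.mp hm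
    subst hαnil
    have hg' : (FreeGroup.of 1)⁻¹ * g = wd [] * (wd (β ++ [1]))⁻¹ := by
      rw [heq, wd_nil, one_mul, one_mul, wd_append, wd_singleton, mul_inv_rev]
    refine ⟨[], β ++ [1], hg', ?_, fun i hi => absurd hi (by simp), ?_, ?_⟩
    · rw [hg', wd_nil, one_mul, norm_wd_inv]; simp
    · exact ⟨ones_mem, by rw [cat_nil]; exact ones_mem⟩
    · refine ⟨ones_mem, ?_⟩
      show cat (β ++ [1]) x1 ∈ evenShift
      rw [cat_snoc_one]
      exact hβX
  · have hαr : α = List.replicate (j + 1) 1 := by rw [hα, hm]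
    have hg' : (FreeGroup.of 1)⁻¹ * g = wd (List.replicate j 1) * (wd β)⁻¹ := by
      rw [heq, hαr, List.replicate_succ, wd_cons]
      group
    have hnrepl : FreeGroup.norm (wd (List.replicate (j + 1) (1 : Fin 2)) * (wd β)⁻¹)
        = (j + 1) + β.length := by
      rw [← hαr, ← heq, hn, hm]
    refine ⟨List.replicate j 1, β, hg', ?_, pref_replicate_ones j, ?_, ?_⟩
    · rw [hg']
      apply norm_wd_mul_inv
      intro a b ha hb
      rw [repl_last a ha]
      exact fun h => beta_ne_one hnrepl b hb h.symm
    · exact ⟨ones_mem, by show cat (List.replicate j 1) x1 ∈ _; rw [cat_ones]; exact ones_mem⟩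
    · exact ⟨ones_mem, hβX⟩

/-- Invariance of `ξ_{1^∞}` under left translation by `of 1`. -/
lemma mem_shift {g : FreeGroup (Fin 2)} (hg : g ∈ xiSet evenShift x1) :
    FreeGroup.of 1 * g ∈ xiSet evenShift x1 := by
  obtain ⟨α, β, heq, hn, hp, ht⟩ := hg
  have hα := pref_ones hp
  have hβX : cat β x1 ∈ evenShift := ht.2.2
  have hcons : (1 : Fin 2) :: α = List.replicate (α.length + 1) 1 := by
    conv_lhs => rw [hα]
    exact List.replicate_succ.symm
  by_cases hβ : β = []
  · subst hβ
    have hg' : FreeGroup.of 1 * g = wd ((1 : Fin 2) :: α) * (wd [])⁻¹ := by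
      rw [heq, wd_cons, wd_nil]
      group
    refine ⟨1 :: α, [], hg', ?_, ?_, ?_, ?_⟩
    · rw [hg', norm_wd_mul_inv _ _ (by simp)]
    · exact hcons ▸ pref_replicate_ones (α.length + 1)
    · refine ⟨ones_mem, ?_⟩
      show cat ((1 : Fin 2) :: α) x1 ∈ _
      rw [hcons, cat_ones]; exact ones_mem
    · exact ⟨ones_mem, by rw [cat_nil]; exact ones_mem⟩
  · rcases fin2_cases (β.getLast hβ) with hb0 | hb1
    · -- last letter of β is 0
      have hg' : FreeGroup.of 1 * g = wd ((1 : Fin 2) :: α) * (wd β)⁻¹ := by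
        rw [heq, wd_cons]
        group
      refine ⟨1 :: α, β, hg', ?_, ?_, ?_, ?_⟩
      · rw [hg']
        apply norm_wd_mul_inv
        intro a b ha hb
        rw [hcons] at ha
        rw [repl_last a ha]
        rw [List.getLast?_eq_getLast hβ] at hb
        injection hb with hb
        rw [← hb, hb0]
        decide
      · exact hcons ▸ pref_replicate_ones (α.length + 1)
      · refine ⟨ones_mem, ?_⟩
        show cat ((1 : Fin 2) :: α) x1 ∈ _
        rw [hcons, cat_ones]; exact ones_mem
      · exact ⟨ones_mem, hβX⟩
    · -- last letter of β is 1 : then α must be empty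
      have hsplit : β.dropLast ++ [1] = β := by
        rw [← hb1]; exact List.dropLast_append_getLast hβ
      have hβlast : β.getLast? = some 1 := by
        rw [List.getLast?_eq_getLast hβ, hb1]
      have hα0 : α = [] := by
        by_contra hαne
        obtain ⟨j, hj⟩ : ∃ j, α.length = j + 1 :=
          ⟨α.length - 1, by have := List.length_pos_iff.mpr hαne; omega⟩
        have hαr : α = List.replicate (j + 1) 1 := by rw [hα, hj]
        have hnrepl : FreeGroup.norm (wd (List.replicate (j + 1) (1 : Fin 2)) * (wd β)⁻¹)
            = (j + 1) + β.length := by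
          rw [← hαr, ← heq, hn, hj]
        exact beta_ne_one hnrepl 1 hβlast rfl
      subst hα0
      have hg' : FreeGroup.of 1 * g = wd [] * (wd β.dropLast)⁻¹ := by
        rw [heq, wd_nil, one_mul, one_mul]
        conv_lhs => rw [← hsplit]
        rw [wd_append, wd_singleton, mul_inv_rev]
        group
      refine ⟨[], β.dropLast, hg', ?_, fun i hi => absurd hi (by simp), ?_, ?_⟩
      · rw [hg', wd_nil, one_mul, norm_wd_inv]; simp
      · exact ⟨ones_mem, by rw [cat_nil]; exact ones_mem⟩
      · refine ⟨ones_mem, ?_⟩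
        show cat β.dropLast x1 ∈ evenShift
        rw [← cat_snoc_one β.dropLast, hsplit]
        exact hβX

/-- The two test elements of the free group. -/
def gOne : FreeGroup (Fin 2) := wd [1] * (wd [0])⁻¹
def gTwo : FreeGroup (Fin 2) := wd [1, 1] * (wd [0])⁻¹

lemma mem_gOne : gOne ∈ xiSet evenShift x1 := by
  refine ⟨[1], [0], rfl, ?_, ?_, ?_, ?_⟩
  · show FreeGroup.norm (wd [1] * (wd [0])⁻¹) = _
    rw [norm_wd_mul_inv _ _ (by intro a b ha hb; simp at ha hb; rw [← ha, ← hb]; decide)]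
  · intro i hi
    simp only [List.length_cons, List.length_nil] at hi
    rcases i with _ | i
    · rfl
    · omega
  · exact ⟨ones_mem, by show cat [(1 : Fin 2)] x1 ∈ _; rw [cat_one_ones]; exact ones_mem⟩
  · exact ⟨ones_mem, by show cat [(0 : Fin 2)] x1 ∈ _; exact cat_zero_ones_mem⟩

lemma mem_gTwo : gTwo ∈ xiSet evenShift x1 := by
  refine ⟨[1, 1], [0], rfl, ?_, ?_, ?_, ?_⟩
  · show FreeGroup.norm (wd [1, 1] * (wd [0])⁻¹) = _
    rw [norm_wd_mul_inv _ _ (by intro a b ha hb; simp at ha hb; rw [← ha, ← hb]; decide)]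
  · intro i hi
    simp only [List.length_cons, List.length_nil] at hi
    rcases i with _ | _ | i
    · rfl
    · rfl
    · omega
  · exact ⟨ones_mem, by show cat [(1 : Fin 2), 1] x1 ∈ _; rw [cat_two_ones]; exact ones_mem⟩
  · exact ⟨ones_mem, by show cat [(0 : Fin 2)] x1 ∈ _; exact cat_zero_ones_mem⟩

lemma parse_gOne {x : ℕ → Fin 2} (h : gOne ∈ xiSet evenShift x) :
    x 0 = 1 ∧ cat [0] (tail x 1) ∈ evenShift := by
  obtain ⟨α, β, heq, hnorm, hpref, htail⟩ := h
  obtain ⟨hα, hβ⟩ := witness_unique (γ := [(1 : Fin 2)]) (δ := [(0 : Fin 2)])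
    (by intro a b ha hb; simp at ha hb; rw [← ha, ← hb]; decide) heq.symm
    (by rw [← heq]; exact hnorm)
  subst hα; subst hβ
  refine ⟨by simpa using hpref 0 (by simp), ?_⟩
  exact htail.2.2

lemma parse_gTwo {x : ℕ → Fin 2} (h : gTwo ∈ xiSet evenShift x) :
    x 1 = 1 ∧ cat [0] (tail x 2) ∈ evenShift := by
  obtain ⟨α, β, heq, hnorm, hpref, htail⟩ := h
  obtain ⟨hα, hβ⟩ := witness_unique (γ := [(1 : Fin 2), 1]) (δ := [(0 : Fin 2)])
    (by intro a b ha hb; simp at ha hb; rw [← ha, ← hb]; decide) heq.symm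
    (by rw [← heq]; exact hnorm)
  subst hα; subst hβ
  refine ⟨by simpa using hpref 1 (by simp), ?_⟩
  exact htail.2.2

end XiAux
/-- for the even shift, `{ξ_{1^∞}}` is open in `Ω_X`, it is a fixed point
of the spectral partial action for the generator `1`, and consequently the spectral
partial action is not topologically free. -/
theorem evenShift_not_topFree :
    (∃ U : Set (FreeGroup (Fin 2) → Bool), IsOpen U ∧
        U ∩ Omega evenShift = {xiB evenShift (fun _ => (1 : Fin 2))}) ∧
    xiB evenShift (fun _ => (1 : Fin 2)) (FreeGroup.of (1 : Fin 2))⁻¹ = true ∧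
    translate (FreeGroup.of (1 : Fin 2)) (xiB evenShift (fun _ => (1 : Fin 2))) =
      xiB evenShift (fun _ => (1 : Fin 2)) ∧
    ¬ TopFree evenShift := by
  -- Part (b): `(of 1)⁻¹ ∈ ξ_{1^∞}`.
  have hb : xiB evenShift (fun _ => (1 : Fin 2)) (FreeGroup.of (1 : Fin 2))⁻¹ = true := by
    rw [xiB_eq_true_iff]
    refine ⟨[], [1], ?_, ?_, fun i hi => absurd hi (by simp), ?_, ?_⟩
    · rw [wd_nil, one_mul, wd_singleton]
    · simp [FreeGroup.norm_inv_eq, FreeGroup.norm_of]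
    · exact ⟨ones_mem, by rw [cat_nil]; exact ones_mem⟩
    · refine ⟨ones_mem, ?_⟩
      show cat [(1 : Fin 2)] (fun _ => (1 : Fin 2)) ∈ _
      rw [cat_one_ones]; exact ones_mem
  -- Part (c): `ξ_{1^∞}` is fixed by translation by `of 1`.
  have hc : translate (FreeGroup.of (1 : Fin 2)) (xiB evenShift (fun _ => (1 : Fin 2))) =
      xiB evenShift (fun _ => (1 : Fin 2)) := by
    funext h
    show xiB evenShift (fun _ => (1 : Fin 2)) ((FreeGroup.of (1 : Fin 2))⁻¹ * h) = _
    by_cases hmem : h ∈ xiSet evenShift (fun _ => (1 : Fin 2))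
    · rw [xiB_eq_true_iff.mpr hmem, xiB_eq_true_iff.mpr (mem_shift_inv hmem)]
    · have h2 : (FreeGroup.of (1 : Fin 2))⁻¹ * h ∉ xiSet evenShift (fun _ => (1 : Fin 2)) := by
        intro hh
        have := mem_shift hh
        rw [mul_inv_cancel_left] at this
        exact hmem this
      simp [xiB, chi, hmem, h2]
  -- Part (a): the singleton `{ξ_{1^∞}}` is open in `Ω`.
  have hx1 : (fun _ => (1 : Fin 2)) ∈ evenShift := ones_mem
  set U : Set (FreeGroup (Fin 2) → Bool) := {ξ | ξ gOne = true ∧ ξ gTwo = true} with hU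
  have hUopen : IsOpen U := by
    have hrw : U = (fun ξ : FreeGroup (Fin 2) → Bool => ξ gOne) ⁻¹' {true} ∩
        (fun ξ : FreeGroup (Fin 2) → Bool => ξ gTwo) ⁻¹' {true} := by
      ext ξ; simp [hU]
    rw [hrw]
    exact ((continuous_apply gOne).isOpen_preimage _ (isOpen_discrete _)).inter
      ((continuous_apply gTwo).isOpen_preimage _ (isOpen_discrete _))
  have hmemU : xiB evenShift (fun _ => (1 : Fin 2)) ∈ U :=
    ⟨xiB_eq_true_iff.mpr mem_gOne, xiB_eq_true_iff.mpr mem_gTwo⟩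
  have hΩ : xiB evenShift (fun _ => (1 : Fin 2)) ∈ Omega evenShift :=
    subset_closure ⟨_, hx1, rfl⟩
  have himg : U ∩ ((fun x => xiB evenShift x) '' evenShift) ⊆
      {xiB evenShift (fun _ => (1 : Fin 2))} := by
    rintro ξ ⟨hUξ, x, hxX, rfl⟩
    have m1 := xiB_eq_true_iff.mp hUξ.1
    have m2 := xiB_eq_true_iff.mp hUξ.2
    obtain ⟨hx0, ht1⟩ := parse_gOne m1
    obtain ⟨hx1', ht2⟩ := parse_gTwo m2
    have hall : x = fun _ => (1 : Fin 2) := funext (all_ones_of ht1 ht2 hx0 hx1')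
    rw [hall]
    rfl
  have hUΩ : U ∩ Omega evenShift = {xiB evenShift (fun _ => (1 : Fin 2))} := by
    apply Set.Subset.antisymm
    · intro ξ hξ
      have h1 : ξ ∈ closure (U ∩ ((fun x => xiB evenShift x) '' evenShift)) :=
        hUopen.inter_closure ⟨hξ.1, hξ.2⟩
      have h2 : ξ ∈ closure {xiB evenShift (fun _ => (1 : Fin 2))} := closure_mono himg h1
      rwa [closure_singleton] at h2
    · intro ξ hξ
      rw [Set.mem_singleton_iff] at hξ
      subst hξ
      exact ⟨hmemU, hΩ⟩
  refine ⟨⟨U, hUopen, hUΩ⟩, hb, hc, ?_⟩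
  intro hTF
  have hone : (FreeGroup.of (1 : Fin 2)) ≠ 1 := by
    intro h
    have := congrArg FreeGroup.norm h
    rw [FreeGroup.norm_of, FreeGroup.norm_one] at this
    exact one_ne_zero this
  have hempty := hTF (FreeGroup.of (1 : Fin 2)) hone U hUopen ?_
  · rw [hUΩ] at hempty
    exact Set.singleton_ne_empty _ hempty
  · rw [hUΩ]
    intro ξ hξ
    rw [Set.mem_singleton_iff] at hξ
    subst hξ
    exact ⟨hb, hc⟩

end SubshiftPaper
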